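/- Let Γ be a finite graph and let A, B, C be dimer coverings of Γ. Then the triple (A, B, C) is flat if and only if there exist a dimer covering K of Γ and a finite set S of pairwise independent even cycles of Γ with a partition S = X ⊔ Y ⊔ Z such that (△_{s∈T} s)△K is a dimer covering for every T ⊆ S, and A = (△_{s∈X} s)△K, B = (△_{s∈Y} s)△K, C = (△_{s∈Z} s)△K. -/

import Mathlib

/-! Finite-graph notions.  A finite graph `Γ = (E, V, ∂)` is given by finite types
`E` (edges) and `V` (vertices) and a boundary map `bd : E → Finset V` with
`(bd e).card = 2` for every edge `e` (multiple edges allowed, loops excluded).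
A vertex `v` is incident to an edge `e` if `v ∈ bd e`. -/

variable {E V : Type*}

/-- A set `s ⊆ E` is cyclic if every vertex is incident to exactly two or to zero
edges of `s`. -/
def IsCyclicSet (bd : E → Finset V) (s : Set E) : Prop :=
  ∀ v : V, {e ∈ s | v ∈ bd e}.ncard = 2 ∨ {e ∈ s | v ∈ bd e} = ∅

/-- A cycle is a minimal nonempty cyclic set. -/
def IsCycle (bd : E → Finset V) (s : Set E) : Prop :=
  IsCyclicSet bd s ∧ s.Nonempty ∧
    ∀ t ⊆ s, IsCyclicSet bd t → t.Nonempty → t = s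

/-- Two sets of edges are independent if no vertex is incident both to an edge of
the first set and to an edge of the second set. -/
def Indep (bd : E → Finset V) (s t : Set E) : Prop :=
  ∀ v : V, ¬ ((∃ e ∈ s, v ∈ bd e) ∧ (∃ e ∈ t, v ∈ bd e))

/-- A half-set: any two distinct edges in it have disjoint boundaries. -/
def IsHalfSet (bd : E → Finset V) (t : Set E) : Prop :=
  ∀ e ∈ t, ∀ f ∈ t, e ≠ f → ∀ v : V, ¬ (v ∈ bd e ∧ v ∈ bd f)

/-- `s', s''` form a partition of `s` into two halves. -/
def AreHalves (bd : E → Finset V) (s s' s'' : Set E) : Prop :=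
  s' ∪ s'' = s ∧ Disjoint s' s'' ∧ IsHalfSet bd s' ∧ IsHalfSet bd s''

/-- A cycle is even if it admits a partition into two halves. -/
def IsEvenCycle (bd : E → Finset V) (s : Set E) : Prop :=
  IsCycle bd s ∧ ∃ s' s'' : Set E, AreHalves bd s s' s''

/-- A dimer covering: a set of edges such that every vertex is incident to exactly
one edge of it. -/
def IsDimer (bd : E → Finset V) (A : Set E) : Prop :=
  ∀ v : V, ∃! e : E, e ∈ A ∧ v ∈ bd e

/-- A triple `(A, B, C)` of dimer coverings is flat if for every vertex `v` at least
two of the edges `A_v, B_v, C_v` coincide (stated via incidence, since the edge of a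
dimer covering at a vertex is unique). -/
def IsFlat (bd : E → Finset V) (A B C : Set E) : Prop :=
  ∀ v : V, ∀ a ∈ A, ∀ b ∈ B, ∀ c ∈ C,
    v ∈ bd a → v ∈ bd b → v ∈ bd c → (a = b ∨ a = c ∨ b = c)

/-- alternating w.r.t. K -/
def AltAt (bd : E → Finset V) (K : Set E) (s : Set E) : Prop :=
  ∀ v : V, (∀ e ∈ s, v ∉ bd e) ∨
    ∃ m k, m ∈ s ∧ k ∈ s ∧ k ∈ K ∧ m ∉ K ∧ v ∈ bd m ∧ v ∈ bd k ∧
      ∀ e ∈ s, v ∈ bd e → e = m ∨ e = k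

lemma glide_dimer (bd : E → Finset V) {K : Set E} (hK : IsDimer bd K) {T : Set (Set E)}
    (hT : T.Pairwise (Indep bd)) (hAlt : ∀ s ∈ T, AltAt bd K s) :
    IsDimer bd (symmDiff (⋃₀ T) K) := by
  intro v
  obtain ⟨k, ⟨hkK, hkv⟩, hku⟩ := hK v
  by_cases htouch : ∃ s ∈ T, ∃ e ∈ s, v ∈ bd e
  · obtain ⟨s, hsT, f, hfs, hfv⟩ := htouch
    rcases hAlt s hsT v with h | ⟨m, k', hms, hk's, hk'K, hmK, hmv, hk'v, huniq⟩
    · exact absurd hfv (h f hfs)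
    have hk'k : k' = k := hku k' ⟨hk'K, hk'v⟩
    refine ⟨m, ⟨Set.mem_symmDiff.2 (Or.inl ⟨⟨s, hsT, hms⟩, hmK⟩), hmv⟩, ?_⟩
    rintro e ⟨he, hev⟩
    rcases Set.mem_symmDiff.1 he with ⟨⟨s', hs'T, hes'⟩, heK⟩ | ⟨heK, heU⟩
    · have hs' : s' = s := by
        by_contra hne
        exact hT hs'T hsT hne v ⟨⟨e, hes', hev⟩, ⟨k', hk's, hk'v⟩⟩
      subst hs'
      rcases huniq e hes' hev with h | h
      · exact h
      · subst h; exact absurd hk'K heK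
    · have he2 : e = k := hku e ⟨heK, hev⟩
      subst he2
      exact absurd ⟨s, hsT, hk'k ▸ hk's⟩ heU
  · push_neg at htouch
    refine ⟨k, ⟨Set.mem_symmDiff.2 (Or.inr ⟨hkK, fun ⟨s, hsT, hks⟩ => htouch s hsT k hks hkv⟩), hkv⟩, ?_⟩
    rintro e ⟨he, hev⟩
    rcases Set.mem_symmDiff.1 he with ⟨⟨s', hs'T, hes'⟩, _⟩ | ⟨heK, _⟩
    · exact absurd hev (htouch s' hs'T e hes')
    · exact hku e ⟨heK, hev⟩

def gcompRel (bd : E → Finset V) (D : Set E) (e f : E) : Prop :=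
  e ∈ D ∧ f ∈ D ∧ ∃ v, v ∈ bd e ∧ v ∈ bd f

lemma gcompRel_symm (bd : E → Finset V) (D : Set E) : Symmetric (gcompRel bd D) :=
  fun _ _ ⟨h1, h2, v, hv1, hv2⟩ => ⟨h2, h1, v, hv2, hv1⟩

def gcomp (bd : E → Finset V) (D : Set E) (e : E) : Set E :=
  {f | f ∈ D ∧ Relation.ReflTransGen (gcompRel bd D) e f}

lemma mem_gcomp_self (bd : E → Finset V) {D : Set E} {e : E} (he : e ∈ D) :
    e ∈ gcomp bd D e := ⟨he, Relation.ReflTransGen.refl⟩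

lemma gcomp_subset (bd : E → Finset V) (D : Set E) (e : E) : gcomp bd D e ⊆ D :=
  fun _ h => h.1

lemma gcomp_closure (bd : E → Finset V) {D : Set E} {e f g : E}
    (hf : f ∈ gcomp bd D e) (hg : g ∈ D) (v : V) (hvf : v ∈ bd f) (hvg : v ∈ bd g) :
    g ∈ gcomp bd D e :=
  ⟨hg, hf.2.tail ⟨hf.1, hg, v, hvf, hvg⟩⟩

lemma gcomp_eq_of_mem (bd : E → Finset V) {D : Set E} {e f : E}
    (hf : f ∈ gcomp bd D e) : gcomp bd D f = gcomp bd D e := by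
  have hsymm : Symmetric (Relation.ReflTransGen (gcompRel bd D)) := fun _ _ h => by
    induction h with
    | refl => exact Relation.ReflTransGen.refl
    | tail _ hr ih => exact Relation.ReflTransGen.head (gcompRel_symm bd D hr) ih
  ext g
  constructor
  · rintro ⟨hgD, hp⟩; exact ⟨hgD, hf.2.trans hp⟩
  · rintro ⟨hgD, hp⟩; exact ⟨hgD, (hsymm hf.2).trans hp⟩

lemma symmdiff_struct (bd : E → Finset V) {M K : Set E}
    (hM : IsDimer bd M) (hK : IsDimer bd K) (v : V) :
    (∀ e ∈ symmDiff M K, v ∉ bd e) ∨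
    ∃ m k, m ≠ k ∧ m ∈ M ∧ m ∉ K ∧ k ∈ K ∧ k ∉ M ∧ v ∈ bd m ∧ v ∈ bd k ∧
      m ∈ symmDiff M K ∧ k ∈ symmDiff M K ∧
      ∀ e ∈ symmDiff M K, v ∈ bd e → e = m ∨ e = k := by
  obtain ⟨m, ⟨hmM, hmv⟩, hmu⟩ := hM v
  obtain ⟨k, ⟨hkK, hkv⟩, hku⟩ := hK v
  by_cases hmk : m = k
  · left
    intro e he hev
    rcases Set.mem_symmDiff.1 he with ⟨heM, heK⟩ | ⟨heK, heM⟩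
    · have : e = m := hmu e ⟨heM, hev⟩
      subst this; subst hmk; exact heK hkK
    · have : e = k := hku e ⟨heK, hev⟩
      subst this; rw [← hmk] at heM; exact heM hmM
  · have hmK : m ∉ K := fun h => hmk (hku m ⟨h, hmv⟩)
    have hkM : k ∉ M := fun h => hmk ((hmu k ⟨h, hkv⟩).symm)
    right
    refine ⟨m, k, hmk, hmM, hmK, hkK, hkM, hmv, hkv,
      Set.mem_symmDiff.2 (Or.inl ⟨hmM, hmK⟩), Set.mem_symmDiff.2 (Or.inr ⟨hkK, hkM⟩), ?_⟩
    intro e he hev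
    rcases Set.mem_symmDiff.1 he with ⟨heM, _⟩ | ⟨heK, _⟩
    · exact Or.inl (hmu e ⟨heM, hev⟩)
    · exact Or.inr (hku e ⟨heK, hev⟩)

/-- edge structure of a component at a vertex -/
lemma gcomp_spec (bd : E → Finset V) {M K : Set E}
    (hM : IsDimer bd M) (hK : IsDimer bd K) (e : E) (v : V) :
    ({f ∈ gcomp bd (symmDiff M K) e | v ∈ bd f} = ∅) ∨
    ∃ m k, m ≠ k ∧ m ∈ M ∧ m ∉ K ∧ k ∈ K ∧ k ∉ M ∧ v ∈ bd m ∧ v ∈ bd k ∧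
      {f ∈ gcomp bd (symmDiff M K) e | v ∈ bd f} = {m, k} ∧
      (∀ f ∈ symmDiff M K, v ∈ bd f → f = m ∨ f = k) := by
  set D := symmDiff M K with hD
  rcases symmdiff_struct bd hM hK v with h | ⟨m, k, hmk, hmM, hmK, hkK, hkM, hmv, hkv, hmD, hkD, hu⟩
  · left
    ext f; simp only [Set.mem_setOf_eq, Set.mem_empty_iff_false, iff_false]
    rintro ⟨hf, hfv⟩
    exact h f (gcomp_subset bd D e hf) hfv
  · by_cases htouch : ∃ f ∈ gcomp bd D e, v ∈ bd f
    · right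
      obtain ⟨f, hfc, hfv⟩ := htouch
      have hfD : f ∈ D := gcomp_subset bd D e hfc
      have hboth : m ∈ gcomp bd D e ∧ k ∈ gcomp bd D e := by
        rcases hu f hfD hfv with rfl | rfl
        · exact ⟨hfc, gcomp_closure bd hfc hkD v hfv hkv⟩
        · exact ⟨gcomp_closure bd hfc hmD v hfv hmv, hfc⟩
      refine ⟨m, k, hmk, hmM, hmK, hkK, hkM, hmv, hkv, ?_, hu⟩
      ext g
      simp only [Set.mem_setOf_eq, Set.mem_insert_iff, Set.mem_singleton_iff]
      constructor
      · rintro ⟨hg, hgv⟩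
        exact hu g (gcomp_subset bd D e hg) hgv
      · rintro (rfl | rfl)
        · exact ⟨hboth.1, hmv⟩
        · exact ⟨hboth.2, hkv⟩
    · left
      ext f; simp only [Set.mem_setOf_eq, Set.mem_empty_iff_false, iff_false]
      rintro ⟨hf, hfv⟩
      exact htouch ⟨f, hf, hfv⟩

lemma gcomp_cyclic (bd : E → Finset V) {M K : Set E}
    (hM : IsDimer bd M) (hK : IsDimer bd K) (e : E) :
    IsCyclicSet bd (gcomp bd (symmDiff M K) e) := by
  intro v
  rcases gcomp_spec bd hM hK e v with h | ⟨m, k, hmk, _, _, _, _, _, _, hset, _⟩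
  · right; exact h
  · left; rw [hset]; exact Set.ncard_pair hmk

lemma gcomp_alt (bd : E → Finset V) {M K : Set E}
    (hM : IsDimer bd M) (hK : IsDimer bd K) (e : E) :
    AltAt bd K (gcomp bd (symmDiff M K) e) := by
  intro v
  rcases gcomp_spec bd hM hK e v with h | ⟨m, k, _, _, hmK, hkK, _, hmv, hkv, hset, _⟩
  · left
    intro f hf hfv
    have : f ∈ ({g ∈ gcomp bd (symmDiff M K) e | v ∈ bd g} : Set E) := ⟨hf, hfv⟩
    rw [h] at this; exact this
  · right
    have hm : m ∈ gcomp bd (symmDiff M K) e := by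
      have : m ∈ ({m, k} : Set E) := Set.mem_insert _ _
      rw [← hset] at this; exact this.1
    have hk : k ∈ gcomp bd (symmDiff M K) e := by
      have : k ∈ ({m, k} : Set E) := Set.mem_insert_of_mem _ rfl
      rw [← hset] at this; exact this.1
    exact ⟨m, k, hm, hk, hkK, hmK, hmv, hkv, fun f hf hfv =>
      (by
        have : f ∈ ({g ∈ gcomp bd (symmDiff M K) e | v ∈ bd g} : Set E) := ⟨hf, hfv⟩
        rw [hset] at this
        exact this)⟩

lemma gcomp_minimal (bd : E → Finset V) {M K : Set E}
    (hM : IsDimer bd M) (hK : IsDimer bd K) {e : E}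
    {t : Set E} (ht : t ⊆ gcomp bd (symmDiff M K) e) (htc : IsCyclicSet bd t)
    (htne : t.Nonempty) : t = gcomp bd (symmDiff M K) e := by
  set D := symmDiff M K with hD
  obtain ⟨f0, hf0⟩ := htne
  apply Set.Subset.antisymm ht
  rintro g ⟨hgD, hp⟩
  have hf0c := ht hf0
  -- path from f0 to g
  have hpath : Relation.ReflTransGen (gcompRel bd D) f0 g := by
    have hsymm : Symmetric (Relation.ReflTransGen (gcompRel bd D)) := fun _ _ h => by
      induction h with
      | refl => exact Relation.ReflTransGen.refl
      | tail _ hr ih => exact Relation.ReflTransGen.head (gcompRel_symm bd D hr) ih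
    exact (hsymm hf0c.2).trans hp
  clear hp hgD
  induction hpath with
  | refl => exact hf0
  | tail _ hrel ih =>
    rename_i g' g hp'
    obtain ⟨hg'D, hgD, v, hvg', hvg⟩ := hrel
    rcases gcomp_spec bd hM hK e v with h | ⟨m, k, hmk, _, _, _, _, _, _, hset, hu⟩
    · exfalso
      have : g' ∈ ({x ∈ gcomp bd D e | v ∈ bd x} : Set E) := ⟨ht ih, hvg'⟩
      rw [h] at this; exact this
    · -- t's edges at v form a 2-elt subset of {m,k}
      have hsub : {x ∈ t | v ∈ bd x} ⊆ ({m, k} : Set E) := by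
        rintro x ⟨hxt, hxv⟩
        have : x ∈ ({y ∈ gcomp bd D e | v ∈ bd y} : Set E) := ⟨ht hxt, hxv⟩
        rw [hset] at this; exact this
      have hne : {x ∈ t | v ∈ bd x}.ncard = 2 := by
        rcases htc v with h2 | h2
        · exact h2
        · exfalso
          have : g' ∈ ({x ∈ t | v ∈ bd x} : Set E) := ⟨ih, hvg'⟩
          rw [h2] at this; exact this
      have heq : {x ∈ t | v ∈ bd x} = ({m, k} : Set E) := by
        exact Set.eq_of_subset_of_ncard_le hsub
          (by rw [hne, Set.ncard_pair hmk]) ((Set.finite_singleton k).insert m)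
      have : g ∈ ({m, k} : Set E) := by
        rcases hu g hgD hvg with rfl | rfl
        · exact Set.mem_insert _ _
        · exact Set.mem_insert_of_mem _ rfl
      rw [← heq] at this
      exact this.1

lemma gcomp_isEvenCycle (bd : E → Finset V) {M K : Set E}
    (hM : IsDimer bd M) (hK : IsDimer bd K) {e : E} (he : e ∈ symmDiff M K) :
    IsEvenCycle bd (gcomp bd (symmDiff M K) e) := by
  set D := symmDiff M K with hD
  have hsub := gcomp_subset bd D e
  refine ⟨⟨gcomp_cyclic bd hM hK e, ⟨e, mem_gcomp_self bd he⟩,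
    fun t hts htc htne => gcomp_minimal bd hM hK hts htc htne⟩,
    gcomp bd D e ∩ M, gcomp bd D e ∩ K, ?_, ?_, ?_, ?_⟩
  · ext f
    simp only [Set.mem_union, Set.mem_inter_iff]
    constructor
    · rintro (⟨h, _⟩ | ⟨h, _⟩) <;> exact h
    · intro hf
      rcases Set.mem_symmDiff.1 (hsub hf) with ⟨hfM, _⟩ | ⟨hfK, _⟩
      · exact Or.inl ⟨hf, hfM⟩
      · exact Or.inr ⟨hf, hfK⟩
  · rw [Set.disjoint_left]
    rintro f ⟨hf, hfM⟩ ⟨_, hfK⟩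
    rcases Set.mem_symmDiff.1 (hsub hf) with ⟨_, h⟩ | ⟨_, h⟩
    · exact h hfK
    · exact h hfM
  · rintro f ⟨_, hfM⟩ g ⟨_, hgM⟩ hfg v ⟨hvf, hvg⟩
    obtain ⟨w, -, hwu⟩ := hM v
    exact hfg ((hwu f ⟨hfM, hvf⟩).trans (hwu g ⟨hgM, hvg⟩).symm)
  · rintro f ⟨_, hfK⟩ g ⟨_, hgK⟩ hfg v ⟨hvf, hvg⟩
    obtain ⟨w, -, hwu⟩ := hK v
    exact hfg ((hwu f ⟨hfK, hvf⟩).trans (hwu g ⟨hgK, hvg⟩).symm)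

lemma gcomp_indep (bd : E → Finset V) {D : Set E} {e f : E}
    (hne : gcomp bd D e ≠ gcomp bd D f) : Indep bd (gcomp bd D e) (gcomp bd D f) := by
  rintro v ⟨⟨e', he', hve'⟩, ⟨f', hf', hvf'⟩⟩
  have : f' ∈ gcomp bd D e := gcomp_closure bd he' (gcomp_subset bd D f hf') v hve' hvf'
  exact hne ((gcomp_eq_of_mem bd this).symm.trans (gcomp_eq_of_mem bd hf'))

lemma indep_symm (bd : E → Finset V) {s t : Set E} (h : Indep bd s t) : Indep bd t s :=
  fun v ⟨p, q⟩ => h v ⟨q, p⟩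

lemma indep_of_subset (bd : E → Finset V) {D1 D2 : Set E}
    (h : ∀ v : V, ¬((∃ e ∈ D1, v ∈ bd e) ∧ (∃ e ∈ D2, v ∈ bd e)))
    {s t : Set E} (hs : s ⊆ D1) (ht : t ⊆ D2) : Indep bd s t :=
  fun v ⟨⟨e, he, hv1⟩, ⟨f, hf, hv2⟩⟩ => h v ⟨⟨e, hs he, hv1⟩, ⟨f, ht hf, hv2⟩⟩


/-- a triple of dimer coverings `(A, B, C)` is flat iff there are a
dimer covering `K` and a finite set `S` of pairwise independent even cycles with a
partition `S = X ⊔ Y ⊔ Z` such that all glides `(∆_{s∈T} s)∆K = (⋃₀ T)∆K`, `T ⊆ S`,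
are dimer coverings and `A = (⋃₀ X)∆K`, `B = (⋃₀ Y)∆K`, `C = (⋃₀ Z)∆K`. -/
theorem flat_iff_vertices_of_cube [Fintype E] [Fintype V]
    (bd : E → Finset V) (hbd : ∀ e, (bd e).card = 2)
    (A B C : Set E) (hA : IsDimer bd A) (hB : IsDimer bd B) (hC : IsDimer bd C) :
    IsFlat bd A B C ↔
      ∃ K : Set E, IsDimer bd K ∧
        ∃ S X Y Z : Set (Set E),
          S.Finite ∧ (∀ c ∈ S, IsEvenCycle bd c) ∧ S.Pairwise (Indep bd) ∧
          X ∪ Y ∪ Z = S ∧ Disjoint X Y ∧ Disjoint X Z ∧ Disjoint Y Z ∧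
          (∀ T ⊆ S, IsDimer bd (symmDiff (⋃₀ T) K)) ∧
          A = symmDiff (⋃₀ X) K ∧ B = symmDiff (⋃₀ Y) K ∧ C = symmDiff (⋃₀ Z) K := by
  classical
  constructor
  · -- forward direction
    intro hflat
    set K : Set E := (A ∩ B) ∪ (A ∩ C) ∪ (B ∩ C) with hKdef
    have hK : IsDimer bd K := by
      intro v
      obtain ⟨a, ⟨haA, hav⟩, hau⟩ := hA v
      obtain ⟨b, ⟨hbB, hbv⟩, hbu⟩ := hB v
      obtain ⟨c, ⟨hcC, hcv⟩, hcu⟩ := hC v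
      have uniq : ∀ e ∈ K, v ∈ bd e →
          (e = a ∧ e = b) ∨ (e = a ∧ e = c) ∨ (e = b ∧ e = c) := by
        rintro e ((⟨h1, h2⟩ | ⟨h1, h2⟩) | ⟨h1, h2⟩) hev
        · exact Or.inl ⟨hau e ⟨h1, hev⟩, hbu e ⟨h2, hev⟩⟩
        · exact Or.inr (Or.inl ⟨hau e ⟨h1, hev⟩, hcu e ⟨h2, hev⟩⟩)
        · exact Or.inr (Or.inr ⟨hbu e ⟨h1, hev⟩, hcu e ⟨h2, hev⟩⟩)
      rcases hflat v a haA b hbB c hcC hav hbv hcv with h | h | h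
      · refine ⟨a, ⟨Or.inl (Or.inl ⟨haA, by rw [h]; exact hbB⟩), hav⟩, ?_⟩
        rintro e ⟨heK, hev⟩
        rcases uniq e heK hev with ⟨h1, _⟩ | ⟨h1, _⟩ | ⟨h1, _⟩
        · exact h1
        · exact h1
        · exact h1.trans h.symm
      · refine ⟨a, ⟨Or.inl (Or.inr ⟨haA, by rw [h]; exact hcC⟩), hav⟩, ?_⟩
        rintro e ⟨heK, hev⟩
        rcases uniq e heK hev with ⟨h1, _⟩ | ⟨h1, _⟩ | ⟨_, h2⟩
        · exact h1
        · exact h1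
        · exact h2.trans h.symm
      · refine ⟨b, ⟨Or.inr ⟨hbB, by rw [h]; exact hcC⟩, hbv⟩, ?_⟩
        rintro e ⟨heK, hev⟩
        rcases uniq e heK hev with ⟨_, h2⟩ | ⟨_, h2⟩ | ⟨h1, _⟩
        · exact h2
        · exact h2.trans h.symm
        · exact h1
    -- support disjointness
    have hsupp : ∀ v : V,
        ¬((∃ e ∈ symmDiff A K, v ∈ bd e) ∧ (∃ e ∈ symmDiff B K, v ∈ bd e)) ∧
        ¬((∃ e ∈ symmDiff A K, v ∈ bd e) ∧ (∃ e ∈ symmDiff C K, v ∈ bd e)) ∧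
        ¬((∃ e ∈ symmDiff B K, v ∈ bd e) ∧ (∃ e ∈ symmDiff C K, v ∈ bd e)) := by
      intro v
      obtain ⟨a, ⟨haA, hav⟩, hau⟩ := hA v
      obtain ⟨b, ⟨hbB, hbv⟩, hbu⟩ := hB v
      obtain ⟨c, ⟨hcC, hcv⟩, hcu⟩ := hC v
      obtain ⟨k, ⟨hkK, hkv⟩, hku⟩ := hK v
      have htgen : ∀ (M : Set E) (m : E), m ∈ M → v ∈ bd m →
          (∀ e, e ∈ M ∧ v ∈ bd e → e = m) →
          (∃ e ∈ symmDiff M K, v ∈ bd e) → m ≠ k := by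
        rintro M m hmM hmv hmu ⟨e, he, hev⟩ hmk
        rcases Set.mem_symmDiff.1 he with ⟨heM, heK⟩ | ⟨heK, heM⟩
        · have : e = m := hmu e ⟨heM, hev⟩
          subst this
          exact heK (by rw [hmk]; exact hkK)
        · have : e = k := hku e ⟨heK, hev⟩
          subst this
          exact heM (by rw [← hmk]; exact hmM)
      have htA := htgen A a haA hav hau
      have htB := htgen B b hbB hbv hbu
      have htC := htgen C c hcC hcv hcu
      have hk2 : (a = k ∧ b = k) ∨ (a = k ∧ c = k) ∨ (b = k ∧ c = k) := by
        rcases hflat v a haA b hbB c hcC hav hbv hcv with h | h | h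
        · have haK : a ∈ K := Or.inl (Or.inl ⟨haA, by rw [h]; exact hbB⟩)
          have : a = k := hku a ⟨haK, hav⟩
          exact Or.inl ⟨this, h ▸ this⟩
        · have haK : a ∈ K := Or.inl (Or.inr ⟨haA, by rw [h]; exact hcC⟩)
          have : a = k := hku a ⟨haK, hav⟩
          exact Or.inr (Or.inl ⟨this, h ▸ this⟩)
        · have hbK : b ∈ K := Or.inr ⟨hbB, by rw [h]; exact hcC⟩
          have : b = k := hku b ⟨hbK, hbv⟩
          exact Or.inr (Or.inr ⟨this, h ▸ this⟩)
      refine ⟨?_, ?_, ?_⟩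
      · rintro ⟨t1, t2⟩
        rcases hk2 with ⟨h1, _⟩ | ⟨h1, _⟩ | ⟨h1, _⟩
        · exact htA t1 h1
        · exact htA t1 h1
        · exact htB t2 h1
      · rintro ⟨t1, t2⟩
        rcases hk2 with ⟨h1, _⟩ | ⟨h1, _⟩ | ⟨_, h2⟩
        · exact htA t1 h1
        · exact htA t1 h1
        · exact htC t2 h2
      · rintro ⟨t1, t2⟩
        rcases hk2 with ⟨_, h2⟩ | ⟨_, h2⟩ | ⟨h1, _⟩
        · exact htB t1 h2
        · exact htC t2 h2
        · exact htB t1 h1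
    set DA := symmDiff A K with hDA
    set DB := symmDiff B K with hDB
    set DC := symmDiff C K with hDC
    set X : Set (Set E) := (fun e => gcomp bd DA e) '' DA with hXdef
    set Y : Set (Set E) := (fun e => gcomp bd DB e) '' DB with hYdef
    set Z : Set (Set E) := (fun e => gcomp bd DC e) '' DC with hZdef
    have hXD : ∀ s ∈ X, s ⊆ DA := by rintro s ⟨e, he, rfl⟩; exact gcomp_subset bd DA e
    have hYD : ∀ s ∈ Y, s ⊆ DB := by rintro s ⟨e, he, rfl⟩; exact gcomp_subset bd DB e
    have hZD : ∀ s ∈ Z, s ⊆ DC := by rintro s ⟨e, he, rfl⟩; exact gcomp_subset bd DC e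
    have hUX : ⋃₀ X = DA := by
      apply Set.Subset.antisymm
      · rintro f ⟨s, hs, hfs⟩; exact hXD s hs hfs
      · intro f hf; exact ⟨gcomp bd DA f, ⟨f, hf, rfl⟩, mem_gcomp_self bd hf⟩
    have hUY : ⋃₀ Y = DB := by
      apply Set.Subset.antisymm
      · rintro f ⟨s, hs, hfs⟩; exact hYD s hs hfs
      · intro f hf; exact ⟨gcomp bd DB f, ⟨f, hf, rfl⟩, mem_gcomp_self bd hf⟩
    have hUZ : ⋃₀ Z = DC := by
      apply Set.Subset.antisymm
      · rintro f ⟨s, hs, hfs⟩; exact hZD s hs hfs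
      · intro f hf; exact ⟨gcomp bd DC f, ⟨f, hf, rfl⟩, mem_gcomp_self bd hf⟩
    have hvtx : ∀ e : E, ∃ v, v ∈ bd e := by
      intro e
      obtain ⟨v, hv⟩ := Finset.card_pos.1 (by rw [hbd e]; norm_num)
      exact ⟨v, hv⟩
    refine ⟨K, hK, X ∪ Y ∪ Z, X, Y, Z, ?_, ?_, ?_, rfl, ?_, ?_, ?_, ?_, ?_, ?_, ?_⟩
    · exact ((DA.toFinite.image _).union (DB.toFinite.image _)).union (DC.toFinite.image _)
    · rintro s ((⟨e, he, rfl⟩ | ⟨e, he, rfl⟩) | ⟨e, he, rfl⟩)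
      · exact gcomp_isEvenCycle bd hA hK he
      · exact gcomp_isEvenCycle bd hB hK he
      · exact gcomp_isEvenCycle bd hC hK he
    · rintro s hs t ht hst
      rcases hs with (⟨e, he, rfl⟩ | ⟨e, he, rfl⟩) | ⟨e, he, rfl⟩ <;>
        rcases ht with (⟨f, hf, rfl⟩ | ⟨f, hf, rfl⟩) | ⟨f, hf, rfl⟩
      · exact gcomp_indep bd hst
      · exact indep_of_subset bd (fun v => (hsupp v).1)
          (gcomp_subset bd DA e) (gcomp_subset bd DB f)
      · exact indep_of_subset bd (fun v => (hsupp v).2.1)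
          (gcomp_subset bd DA e) (gcomp_subset bd DC f)
      · exact indep_symm bd (indep_of_subset bd (fun v => (hsupp v).1)
          (gcomp_subset bd DA f) (gcomp_subset bd DB e))
      · exact gcomp_indep bd hst
      · exact indep_of_subset bd (fun v => (hsupp v).2.2)
          (gcomp_subset bd DB e) (gcomp_subset bd DC f)
      · exact indep_symm bd (indep_of_subset bd (fun v => (hsupp v).2.1)
          (gcomp_subset bd DA f) (gcomp_subset bd DC e))
      · exact indep_symm bd (indep_of_subset bd (fun v => (hsupp v).2.2)
          (gcomp_subset bd DB f) (gcomp_subset bd DC e))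
      · exact gcomp_indep bd hst
    · rw [Set.disjoint_left]
      rintro s ⟨e, he, rfl⟩ ⟨f, hf, heq⟩
      obtain ⟨v, hv⟩ := hvtx e
      exact (hsupp v).1 ⟨⟨e, he, hv⟩,
        ⟨e, gcomp_subset bd DB f
          ((show gcomp bd DB f = gcomp bd DA e from heq) ▸ mem_gcomp_self bd he), hv⟩⟩
    · rw [Set.disjoint_left]
      rintro s ⟨e, he, rfl⟩ ⟨f, hf, heq⟩
      obtain ⟨v, hv⟩ := hvtx e
      exact (hsupp v).2.1 ⟨⟨e, he, hv⟩,
        ⟨e, gcomp_subset bd DC f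
          ((show gcomp bd DC f = gcomp bd DA e from heq) ▸ mem_gcomp_self bd he), hv⟩⟩
    · rw [Set.disjoint_left]
      rintro s ⟨e, he, rfl⟩ ⟨f, hf, heq⟩
      obtain ⟨v, hv⟩ := hvtx e
      exact (hsupp v).2.2 ⟨⟨e, he, hv⟩,
        ⟨e, gcomp_subset bd DC f
          ((show gcomp bd DC f = gcomp bd DB e from heq) ▸ mem_gcomp_self bd he), hv⟩⟩
    · intro T hTS
      apply glide_dimer bd hK
      · rintro s hs t ht hst
        have hpair : (X ∪ Y ∪ Z : Set (Set E)).Pairwise (Indep bd) := by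
          rintro s' hs' t' ht' hst'
          rcases hs' with (⟨e, he, rfl⟩ | ⟨e, he, rfl⟩) | ⟨e, he, rfl⟩ <;>
            rcases ht' with (⟨f, hf, rfl⟩ | ⟨f, hf, rfl⟩) | ⟨f, hf, rfl⟩
          · exact gcomp_indep bd hst'
          · exact indep_of_subset bd (fun v => (hsupp v).1)
              (gcomp_subset bd DA e) (gcomp_subset bd DB f)
          · exact indep_of_subset bd (fun v => (hsupp v).2.1)
              (gcomp_subset bd DA e) (gcomp_subset bd DC f)
          · exact indep_symm bd (indep_of_subset bd (fun v => (hsupp v).1)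
              (gcomp_subset bd DA f) (gcomp_subset bd DB e))
          · exact gcomp_indep bd hst'
          · exact indep_of_subset bd (fun v => (hsupp v).2.2)
              (gcomp_subset bd DB e) (gcomp_subset bd DC f)
          · exact indep_symm bd (indep_of_subset bd (fun v => (hsupp v).2.1)
              (gcomp_subset bd DA f) (gcomp_subset bd DC e))
          · exact indep_symm bd (indep_of_subset bd (fun v => (hsupp v).2.2)
              (gcomp_subset bd DB f) (gcomp_subset bd DC e))
          · exact gcomp_indep bd hst'
        exact hpair (hTS hs) (hTS ht) hst
      · intro s hs
        rcases hTS hs with (⟨e, he, rfl⟩ | ⟨e, he, rfl⟩) | ⟨e, he, rfl⟩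
        · exact gcomp_alt bd hA hK e
        · exact gcomp_alt bd hB hK e
        · exact gcomp_alt bd hC hK e
    · rw [hUX]; exact (symmDiff_symmDiff_cancel_right K A).symm
    · rw [hUY]; exact (symmDiff_symmDiff_cancel_right K B).symm
    · rw [hUZ]; exact (symmDiff_symmDiff_cancel_right K C).symm
  · -- backward direction
    rintro ⟨K, hK, S, X, Y, Z, _, _, hSind, hXYZ, hXY, hXZ, hYZ, _, hAe, hBe, hCe⟩
    intro v a haA b hbB c hcC hva hvb hvc
    obtain ⟨k, ⟨hkK, hkv⟩, hku⟩ := hK v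
    have key : ∀ (W : Set (Set E)) (M : Set E), M = symmDiff (⋃₀ W) K →
        ∀ e ∈ M, v ∈ bd e → e = k ∨ ∃ s ∈ W, ∃ f ∈ s, v ∈ bd f := by
      rintro W M rfl e he hev
      rcases Set.mem_symmDiff.1 he with ⟨⟨s, hsW, hes⟩, _⟩ | ⟨heK, _⟩
      · exact Or.inr ⟨s, hsW, e, hes, hev⟩
      · exact Or.inl (hku e ⟨heK, hev⟩)
    have hXS : X ⊆ S := hXYZ ▸ (Set.subset_union_left.trans Set.subset_union_left)
    have hYS : Y ⊆ S := hXYZ ▸ (Set.subset_union_right.trans Set.subset_union_left)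
    have hZS : Z ⊆ S := hXYZ ▸ Set.subset_union_right
    have notwo : ∀ (W W' : Set (Set E)), W ⊆ S → W' ⊆ S → Disjoint W W' →
        (∃ s ∈ W, ∃ f ∈ s, v ∈ bd f) → (∃ s ∈ W', ∃ f ∈ s, v ∈ bd f) → False := by
      rintro W W' hWS hW'S hdisj ⟨s, hsW, f, hfs, hvf⟩ ⟨t, htW', g, hgt, hvg⟩
      have hst : s ≠ t := fun h => (Set.disjoint_left.1 hdisj hsW) (h ▸ htW')
      exact hSind (hWS hsW) (hW'S htW') hst v ⟨⟨f, hfs, hvf⟩, ⟨g, hgt, hvg⟩⟩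
    rcases key X A hAe a haA hva with ha | ha
    · rcases key Y B hBe b hbB hvb with hb | hb
      · exact Or.inl (ha.trans hb.symm)
      · rcases key Z C hCe c hcC hvc with hc | hc
        · exact Or.inr (Or.inl (ha.trans hc.symm))
        · exact (notwo Y Z hYS hZS hYZ hb hc).elim
    · rcases key Y B hBe b hbB hvb with hb | hb
      · rcases key Z C hCe c hcC hvc with hc | hc
        · exact Or.inr (Or.inr (hb.trans hc.symm))
        · exact (notwo X Z hXS hZS hXZ ha hc).elim
      · exact (notwo X Y hXS hYS hXY ha hb).elim
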